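/- arXiv:1409.7675 — 6 statements merged into one kernel-verified Lean document; each statement's English description precedes it below -/
import Mathlib

section
/- Let g be the probability mass function of a Poisson binomial distribution with N trials and success probabilities p_1,...,p_N in [0,1]. Then for every integer x with 1 ≤ x ≤ N-1, g(x)^2 ≥ g(x-1) * g(x+1) (i.e., the pmf is log-concave). -/
open Finset

/-- Poisson binomial pmf with success probabilities `p : Fin N → ℝ`. -/
def poissonBinomialPmf {N : ℕ} (p : Fin N → ℝ) (x : ℕ) : ℝ :=
  ∑ S ∈ Finset.powersetCard x (Finset.univ : Finset (Fin N)),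
    (∏ i ∈ S, p i) * ∏ i ∈ Sᶜ, (1 - p i)

namespace PBAux

variable {ι : Type*} [DecidableEq ι]

/-- Elementary-symmetric-like sum over subsets of `s` of given cardinality. -/
noncomputable def esum (s : Finset ι) (p : ι → ℝ) (x : ℕ) : ℝ :=
  ∑ S ∈ s.powersetCard x, (∏ i ∈ S, p i) * ∏ i ∈ s \ S, (1 - p i)

lemma esum_empty (p : ι → ℝ) (x : ℕ) :
    esum (∅ : Finset ι) p x = if x = 0 then 1 else 0 := by
  cases x with
  | zero => simp [esum]
  | succ n =>
    simp only [esum, Nat.succ_ne_zero, if_false]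
    rw [Finset.powersetCard_eq_empty.2 (by simp)]
    simp

lemma esum_insert_zero {a : ι} {s : Finset ι} (ha : a ∉ s) (p : ι → ℝ) :
    esum (insert a s) p 0 = (1 - p a) * esum s p 0 := by
  simp only [esum, Finset.powersetCard_zero, Finset.sum_singleton, Finset.prod_empty,
    Finset.sdiff_empty, one_mul]
  rw [Finset.prod_insert ha]

lemma esum_insert_succ {a : ι} {s : Finset ι} (ha : a ∉ s) (p : ι → ℝ) (x : ℕ) :
    esum (insert a s) p (x + 1) = p a * esum s p x + (1 - p a) * esum s p (x + 1) := by
  simp only [esum]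
  rw [Finset.powersetCard_succ_insert ha, Finset.sum_union, Finset.sum_image, add_comm]
  · congr 1
    · -- subsets containing a
      rw [Finset.mul_sum]
      apply Finset.sum_congr rfl
      intro S hS
      rw [Finset.mem_powersetCard] at hS
      have haS : a ∉ S := fun h => ha (hS.1 h)
      have h1 : insert a s \ insert a S = s \ S := by
        ext i
        simp only [Finset.mem_sdiff, Finset.mem_insert]
        constructor
        · rintro ⟨hi1 | hi1, hi2⟩
          · exact absurd (Or.inl hi1) hi2
          · exact ⟨hi1, fun h => hi2 (Or.inr h)⟩
        · rintro ⟨hi1, hi2⟩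
          exact ⟨Or.inr hi1, by
            rintro (rfl | h)
            · exact ha hi1
            · exact hi2 h⟩
      rw [h1, Finset.prod_insert haS]
      ring
    · -- subsets not containing a
      rw [Finset.mul_sum]
      apply Finset.sum_congr rfl
      intro S hS
      rw [Finset.mem_powersetCard] at hS
      have haS : a ∉ s \ S := by simp [ha]
      have : insert a s \ S = insert a (s \ S) := by
        rw [Finset.insert_sdiff_of_notMem]
        intro h
        exact ha (hS.1 h)
      rw [this, Finset.prod_insert haS]
      ring
  · -- injectivity of insert a
    intro S hS T hT hST
    rw [Finset.mem_coe, Finset.mem_powersetCard] at hS hT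
    have haS : a ∉ S := fun h => ha (hS.1 h)
    have haT : a ∉ T := fun h => ha (hT.1 h)
    have : insert a S \ {a} = insert a T \ {a} := by rw [hST]
    simpa [Finset.insert_sdiff_of_mem, Finset.sdiff_singleton_eq_erase,
      Finset.erase_insert haS, Finset.erase_insert haT] using this
  · -- disjointness
    rw [Finset.disjoint_left]
    intro S hS hS'
    rw [Finset.mem_powersetCard] at hS
    rw [Finset.mem_image] at hS'
    obtain ⟨T, _, rfl⟩ := hS'
    exact ha (hS.1 (Finset.mem_insert_self a T))

lemma esum_nonneg {s : Finset ι} {p : ι → ℝ} (hp : ∀ i, p i ∈ Set.Icc (0 : ℝ) 1) (x : ℕ) :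
    0 ≤ esum s p x := by
  apply Finset.sum_nonneg
  intro S _
  apply mul_nonneg
  · exact Finset.prod_nonneg fun i _ => (hp i).1
  · exact Finset.prod_nonneg fun i _ => by linarith [(hp i).2]

/-- Strong log-concavity of `esum`, by induction on the finset. -/
lemma esum_slc {p : ι → ℝ} (hp : ∀ i, p i ∈ Set.Icc (0 : ℝ) 1) (s : Finset ι) :
    ∀ a b : ℕ, a ≤ b → esum s p a * esum s p (b + 2) ≤ esum s p (a + 1) * esum s p (b + 1) := by
  induction s using Finset.induction_on with
  | empty =>
    intro a b _
    rw [esum_empty, esum_empty, esum_empty, esum_empty]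
    have : ¬ (b + 2 = 0) := by omega
    have : ¬ (a + 1 = 0) := by omega
    have : ¬ (b + 1 = 0) := by omega
    by_cases h : a = 0 <;> simp_all
  | insert _ _ ha ih =>
    rename_i c s
    -- two-step consequence of ih
    have twostep : ∀ u v : ℕ, u ≤ v + 1 →
        esum s p u * esum s p (v + 3) ≤ esum s p (u + 2) * esum s p (v + 1) := by
      intro u v huv
      rcases Nat.lt_or_ge u v with h | h
      · calc esum s p u * esum s p (v + 3) ≤ esum s p (u + 1) * esum s p (v + 2) :=
              ih u (v + 1) (by omega)
          _ ≤ esum s p (u + 2) * esum s p (v + 1) := ih (u + 1) v (by omega)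
      · rcases Nat.lt_or_ge u (v + 1) with h' | h'
        · -- u = v
          have huv' : u = v := by omega
          subst huv'
          calc esum s p u * esum s p (u + 3) ≤ esum s p (u + 1) * esum s p (u + 2) :=
                ih u (u + 1) (by omega)
            _ = esum s p (u + 2) * esum s p (u + 1) := by ring
        · -- u = v + 1
          have huv' : u = v + 1 := by omega
          subst huv'
          have h2 : v + 1 + 2 = v + 3 := by ring
          rw [h2]
          exact le_of_eq (by ring)
    intro a b hab
    have hc0 : (0:ℝ) ≤ p c := (hp c).1
    have hc1 : (0:ℝ) ≤ 1 - p c := by linarith [(hp c).2]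
    cases a with
    | zero =>
      rw [esum_insert_zero ha, esum_insert_succ ha, esum_insert_succ ha, esum_insert_succ ha]
      have h1 : esum s p 0 * esum s p (b + 1 + 1) ≤ esum s p 1 * esum s p (b + 1) :=
        ih 0 b (Nat.zero_le b)
      have e0 := esum_nonneg hp (s := s) 0
      have e1 := esum_nonneg hp (s := s) 1
      have eb := esum_nonneg hp (s := s) b
      have eb1 := esum_nonneg hp (s := s) (b + 1)
      have eb2 := esum_nonneg hp (s := s) (b + 2)
      have hb2 : b + 1 + 1 = b + 2 := by ring
      rw [hb2] at h1 ⊢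
      nlinarith [mul_nonneg (mul_nonneg hc0 hc0) (mul_nonneg e0 eb),
        mul_nonneg (mul_nonneg hc0 hc1) (mul_nonneg e1 eb),
        mul_nonneg (mul_nonneg hc1 hc1) (sub_nonneg.2 h1)]
    | succ a' =>
      cases b with
      | zero => omega
      | succ b' =>
        have hab' : a' ≤ b' := by omega
        rw [esum_insert_succ ha, esum_insert_succ ha, esum_insert_succ ha, esum_insert_succ ha]
        have hr1 : b' + 1 + 2 = b' + 2 + 1 := by ring
        have h1 : esum s p a' * esum s p (b' + 2) ≤ esum s p (a' + 1) * esum s p (b' + 1) :=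
          ih a' b' hab'
        have h2 : esum s p (a' + 1) * esum s p (b' + 1 + 2) ≤
            esum s p (a' + 2) * esum s p (b' + 2) := ih (a' + 1) (b' + 1) (by omega)
        have h3 : esum s p a' * esum s p (b' + 3) ≤ esum s p (a' + 2) * esum s p (b' + 1) :=
          twostep a' b' (by omega)
        have hb3 : b' + 1 + 2 = b' + 3 := by ring
        rw [hb3] at h2 ⊢
        have ha2 : a' + 1 + 1 = a' + 2 := by ring
        rw [ha2]
        have hb2 : b' + 1 + 1 = b' + 2 := by ring
        rw [hb2]
        nlinarith [mul_nonneg (mul_nonneg hc0 hc0) (sub_nonneg.2 h1),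
          mul_nonneg (mul_nonneg hc1 hc1) (sub_nonneg.2 h2),
          mul_nonneg (mul_nonneg hc0 hc1) (sub_nonneg.2 h3)]

end PBAux

lemma poissonBinomialPmf_eq_esum {N : ℕ} (p : Fin N → ℝ) (x : ℕ) :
    poissonBinomialPmf p x = PBAux.esum (Finset.univ : Finset (Fin N)) p x := by
  unfold poissonBinomialPmf PBAux.esum
  apply Finset.sum_congr rfl
  intro S _
  rw [Finset.compl_eq_univ_sdiff]

theorem poissonBinomial_log_concave {N : ℕ} (p : Fin N → ℝ)
    (hp : ∀ i, p i ∈ Set.Icc (0 : ℝ) 1) (x : ℕ) (hx1 : 1 ≤ x) (hx2 : x ≤ N - 1) :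
    (poissonBinomialPmf p x) ^ 2 ≥
      poissonBinomialPmf p (x - 1) * poissonBinomialPmf p (x + 1) := by
  obtain ⟨a, rfl⟩ : ∃ a, x = a + 1 := ⟨x - 1, by omega⟩
  simp only [poissonBinomialPmf_eq_esum, Nat.add_sub_cancel]
  have h := PBAux.esum_slc hp (Finset.univ : Finset (Fin N)) a a le_rfl
  have : a + 1 + 1 = a + 2 := by ring
  rw [this]
  nlinarith [h]
end

section
/- Let g be the pmf of a Poisson binomial distribution with N trials and success probabilities p_1,...,p_N strictly between 0 and 1. Then for every integer x with 1 ≤ x ≤ N-1, g(x)^2 > C(x) · g(x+1) · g(x-1), where C(x) = max((x+1)/x, (N-x+1)/(N-x)). -/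
open Finset

namespace WangAux

variable {N : ℕ} (p : Fin N → ℝ)

def w (S : Finset (Fin N)) : ℝ := (∏ i ∈ S, p i) * ∏ i ∈ Sᶜ, (1 - p i)

lemma w_eq (S : Finset (Fin N)) : w p S = ∏ i, (if i ∈ S then p i else 1 - p i) := by
  rw [w, ← Finset.prod_mul_prod_compl S]
  congr 1
  · exact Finset.prod_congr rfl fun i hi => by simp [hi]
  · exact Finset.prod_congr rfl fun i hi => by simp [Finset.mem_compl.mp hi]

def Wt (I U : Finset (Fin N)) : ℝ :=
  ∏ i, (if i ∈ I then p i ^ 2 else if i ∈ U then p i * (1 - p i) else (1 - p i) ^ 2)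

lemma w_mul_w (C D : Finset (Fin N)) : w p C * w p D = Wt p (C ∩ D) (C ∪ D) := by
  rw [w_eq, w_eq, Wt, ← Finset.prod_mul_distrib]
  refine Finset.prod_congr rfl fun i _ => ?_
  by_cases hC : i ∈ C <;> by_cases hD : i ∈ D <;> simp [hC, hD, sq, mul_comm]

lemma Wt_pos (hp : ∀ i, p i ∈ Set.Ioo (0:ℝ) 1) (I U : Finset (Fin N)) : 0 < Wt p I U := by
  refine Finset.prod_pos fun i _ => ?_
  have h1 := (hp i).1
  have h2 := (hp i).2
  split_ifs <;> nlinarith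

def K (x : ℕ) : Finset (Finset (Fin N) × Finset (Fin N)) :=
  ((univ : Finset (Fin N)).powerset ×ˢ (univ : Finset (Fin N)).powerset).filter
    fun IU => IU.1 ⊆ IU.2 ∧ IU.1.card + IU.2.card = 2 * x ∧ IU.1.card ≤ x

lemma key (x k j : ℕ) (hk : x ≤ k) (hj : j ≤ x) (hkj : k + j = 2 * x) :
    (∑ C ∈ powersetCard k (univ : Finset (Fin N)), w p C) *
      (∑ D ∈ powersetCard j (univ : Finset (Fin N)), w p D) =
    ∑ IU ∈ K x, ((IU.2.card - IU.1.card).choose (k - IU.1.card) : ℝ) * Wt p IU.1 IU.2 := by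
  rw [Finset.sum_mul_sum, ← Finset.sum_product']
  have hmaps : ∀ CD ∈ powersetCard k (univ : Finset (Fin N)) ×ˢ powersetCard j univ,
      (CD.1 ∩ CD.2, CD.1 ∪ CD.2) ∈ K (N := N) x := by
    rintro ⟨C, D⟩ hCD
    simp only [Finset.mem_product, Finset.mem_powersetCard] at hCD
    obtain ⟨⟨-, hC⟩, ⟨-, hD⟩⟩ := hCD
    rw [K, Finset.mem_filter, Finset.mem_product]
    refine ⟨⟨Finset.mem_powerset.2 (Finset.subset_univ _),
      Finset.mem_powerset.2 (Finset.subset_univ _)⟩,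
      Finset.inter_subset_union, by
        rw [Finset.card_inter_add_card_union, hC, hD, hkj], ?_⟩
    have : (C ∩ D).card ≤ D.card := Finset.card_le_card Finset.inter_subset_right
    simp only
    omega
  rw [← Finset.sum_fiberwise_of_maps_to hmaps]
  refine Finset.sum_congr rfl fun IU hIU => ?_
  obtain ⟨I, U⟩ := IU
  rw [K, Finset.mem_filter] at hIU
  obtain ⟨-, hIsub, hcard, hIx⟩ := hIU
  dsimp only at hIsub hcard hIx ⊢
  have hterm : ∀ CD ∈ (powersetCard k (univ : Finset (Fin N)) ×ˢ powersetCard j univ).filter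
      (fun CD => (CD.1 ∩ CD.2, CD.1 ∪ CD.2) = (I, U)),
      w p CD.1 * w p CD.2 = Wt p I U := by
    rintro ⟨C, D⟩ hCD
    simp only [Finset.mem_filter, Prod.mk.injEq] at hCD
    rw [w_mul_w, hCD.2.1, hCD.2.2]
  rw [Finset.sum_congr rfl hterm, Finset.sum_const, nsmul_eq_mul]
  have hc : ((powersetCard k (univ : Finset (Fin N)) ×ˢ powersetCard j univ).filter
      (fun CD => (CD.1 ∩ CD.2, CD.1 ∪ CD.2) = (I, U))).card
      = (powersetCard (k - I.card) (U \ I)).card := by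
    refine Finset.card_bij' (fun CD _ => CD.1 \ CD.2) (fun A _ => (I ∪ A, U \ A)) ?_ ?_ ?_ ?_
    · rintro ⟨C, D⟩ hCD
      simp only [Finset.mem_filter, Finset.mem_product, Finset.mem_powersetCard,
        Prod.mk.injEq] at hCD
      obtain ⟨⟨⟨-, hC⟩, -, hD⟩, hI, hU⟩ := hCD
      subst hI hU
      rw [Finset.mem_powersetCard]
      dsimp only
      constructor
      · intro a ha
        rw [Finset.mem_sdiff] at ha ⊢
        simp only [Finset.mem_union, Finset.mem_inter]
        tauto
      · rw [← Finset.sdiff_inter_self_left C D,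
          Finset.card_sdiff_of_subset Finset.inter_subset_left, hC]
    · rintro A hA
      rw [Finset.mem_powersetCard] at hA
      obtain ⟨hAsub, hAcard⟩ := hA
      have hAU : A ⊆ U := hAsub.trans Finset.sdiff_subset
      have hAI : Disjoint A I := Finset.disjoint_left.2 fun a ha =>
        (Finset.mem_sdiff.1 (hAsub ha)).2
      have hiu : I.card ≤ U.card := Finset.card_le_card hIsub
      have hAle : A.card ≤ U.card - I.card := by
        rw [← Finset.card_sdiff_of_subset hIsub]; exact Finset.card_le_card hAsub
      simp only [Finset.mem_filter, Finset.mem_product, Finset.mem_powersetCard,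
        Prod.mk.injEq]
      refine ⟨⟨⟨Finset.subset_univ _, ?_⟩, Finset.subset_univ _, ?_⟩, ?_, ?_⟩
      · rw [Finset.card_union_of_disjoint hAI.symm, hAcard]; omega
      · rw [Finset.card_sdiff_of_subset hAU, hAcard]; omega
      · ext a
        simp only [Finset.mem_inter, Finset.mem_union, Finset.mem_sdiff]
        constructor
        · rintro ⟨h1 | h1, h2, h3⟩
          · exact h1
          · exact absurd h1 h3
        · intro hI'
          exact ⟨Or.inl hI', hIsub hI', fun hA' => Finset.disjoint_left.1 hAI hA' hI'⟩
      · ext a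
        simp only [Finset.mem_union, Finset.mem_sdiff]
        constructor
        · rintro ((h | h) | ⟨h, -⟩)
          · exact hIsub h
          · exact hAU h
          · exact h
        · intro hU'
          by_cases hA' : a ∈ A
          · exact Or.inl (Or.inr hA')
          · exact Or.inr ⟨hU', hA'⟩
    · rintro ⟨C, D⟩ hCD
      simp only [Finset.mem_filter, Prod.mk.injEq] at hCD
      obtain ⟨-, hI, hU⟩ := hCD
      subst hI hU
      dsimp only
      rw [Prod.mk.injEq]
      constructor
      · ext a
        simp only [Finset.mem_union, Finset.mem_inter, Finset.mem_sdiff]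
        tauto
      · ext a
        simp only [Finset.mem_union, Finset.mem_sdiff, Finset.mem_inter]
        tauto
    · rintro A hA
      rw [Finset.mem_powersetCard] at hA
      ext a
      have h1 : a ∈ I → a ∈ U := fun h => hIsub h
      have h2 : a ∈ A → a ∈ U := fun h => (Finset.mem_sdiff.1 (hA.1 h)).1
      simp only [Finset.mem_sdiff, Finset.mem_union, not_and, not_not]
      constructor
      · rintro ⟨h3 | h3, h4⟩
        · exact h4 (h1 h3)
        · exact h3
      · intro h3
        exact ⟨Or.inr h3, fun _ => h3⟩
  rw [hc, Finset.card_powersetCard, Finset.card_sdiff_of_subset hIsub]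


lemma nat_ineq (m M : ℕ) (h : m ≤ M) :
    (M + 1) * (2 * m).choose (m + 1) ≤ M * (2 * m).choose m := by
  rcases Nat.eq_zero_or_pos m with rfl | hm
  · simp
  · apply Nat.le_of_mul_le_mul_right _ (Nat.succ_pos m)
    have h1 : (2 * m).choose (m + 1) * (m + 1) = (2 * m).choose m * m := by
      rw [Nat.choose_succ_right_eq]
      congr 1
      omega
    have h2 : (M + 1) * m ≤ M * (m + 1) := by nlinarith
    calc (M + 1) * (2 * m).choose (m + 1) * (m + 1)
        = (M + 1) * ((2 * m).choose m * m) := by rw [mul_assoc, h1]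
      _ = (2 * m).choose m * ((M + 1) * m) := by ring
      _ ≤ (2 * m).choose m * (M * (m + 1)) := Nat.mul_le_mul_left _ h2
      _ = M * (2 * m).choose m * (m + 1) := by ring

end WangAux

open WangAux in
/-- Theorem 2 of Wang (1993): strengthened log-concavity of the Poisson binomial pmf. -/
theorem poissonBinomial_wang_ineq {N : ℕ} (p : Fin N → ℝ)
    (hp : ∀ i, p i ∈ Set.Ioo (0 : ℝ) 1) (x : ℕ) (hx1 : 1 ≤ x) (hx2 : x ≤ N - 1) :
    (poissonBinomialPmf p x) ^ 2 >
      max ((x + 1 : ℝ) / x) ((N - x + 1 : ℝ) / (N - x)) *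
        poissonBinomialPmf p (x + 1) * poissonBinomialPmf p (x - 1) := by
  have hxN : x + 1 ≤ N := by omega
  set M := min x (N - x) with hM
  have hM1 : 1 ≤ M := by omega
  have hg : ∀ k, poissonBinomialPmf p k = ∑ S ∈ powersetCard k univ, w p S := fun k => rfl
  have h1 := key p x x x le_rfl le_rfl (by ring)
  have h2 := key p x (x + 1) (x - 1) (by omega) (by omega) (by omega)
  -- termwise strict comparison
  have hstep :
      ∑ IU ∈ K (N := N) x,
          ((M : ℝ) + 1) * (((IU.2.card - IU.1.card).choose (x + 1 - IU.1.card) : ℝ) * Wt p IU.1 IU.2)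
        < ∑ IU ∈ K (N := N) x,
          (M : ℝ) * (((IU.2.card - IU.1.card).choose (x - IU.1.card) : ℝ) * Wt p IU.1 IU.2) := by
    apply Finset.sum_lt_sum
    · rintro ⟨I, U⟩ hIU
      rw [K, Finset.mem_filter] at hIU
      obtain ⟨hmem, hIsub, hcard, hIx⟩ := hIU
      dsimp only at hIsub hcard hIx ⊢
      have hUN : U.card ≤ N := by
        simpa using Finset.card_le_univ U
      set i := I.card
      set u := U.card
      set m := x - i with hm
      have hui : u - i = 2 * m := by omega
      have hx1i : x + 1 - i = m + 1 := by omega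
      have hmM : m ≤ M := by omega
      rw [hui, hx1i]
      have hW := Wt_pos p hp I U
      have hnat := nat_ineq m M hmM
      have hcast : ((M + 1) * (2 * m).choose (m + 1) : ℝ) ≤ ((M * (2 * m).choose m : ℕ) : ℝ) := by
        push_cast
        exact_mod_cast hnat
      push_cast at hcast
      nlinarith
    · obtain ⟨I₀, -, hI₀⟩ := Finset.exists_subset_card_eq
        (show x ≤ (univ : Finset (Fin N)).card by simp; omega)
      refine ⟨(I₀, I₀), ?_, ?_⟩
      · rw [K, Finset.mem_filter, Finset.mem_product]
        exact ⟨⟨Finset.mem_powerset.2 (Finset.subset_univ _),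
          Finset.mem_powerset.2 (Finset.subset_univ _)⟩, le_rfl, by dsimp only; omega,
          by dsimp only; omega⟩
      · dsimp only
        rw [hI₀]
        have hW := Wt_pos p hp I₀ I₀
        simp only [Nat.sub_self, Nat.add_sub_cancel_left, Nat.choose_zero_right,
          Nat.choose_one_right, Nat.choose_self]
        push_cast
        have hMR : (1 : ℝ) ≤ (M : ℝ) := by exact_mod_cast hM1
        nlinarith
  have hmain : ((M : ℝ) + 1) * (poissonBinomialPmf p (x + 1) * poissonBinomialPmf p (x - 1))
      < (M : ℝ) * (poissonBinomialPmf p x * poissonBinomialPmf p x) := by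
    calc ((M : ℝ) + 1) * (poissonBinomialPmf p (x + 1) * poissonBinomialPmf p (x - 1))
        = ∑ IU ∈ K (N := N) x,
            ((M : ℝ) + 1) * (((IU.2.card - IU.1.card).choose (x + 1 - IU.1.card) : ℝ) * Wt p IU.1 IU.2) := by
          rw [hg, hg, h2, Finset.mul_sum]
      _ < _ := hstep
      _ = (M : ℝ) * (poissonBinomialPmf p x * poissonBinomialPmf p x) := by
          rw [hg, h1, Finset.mul_sum]
  -- final arithmetic
  have hx0 : (0 : ℝ) < x := by exact_mod_cast hx1
  have hxNR : (x : ℝ) + 1 ≤ N := by exact_mod_cast hxN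
  have hNx0 : (0 : ℝ) < (N : ℝ) - x := by linarith
  have hMpos : (0 : ℝ) < M := by exact_mod_cast hM1
  have hNxcast : ((N - x : ℕ) : ℝ) = (N : ℝ) - x := by
    rw [Nat.cast_sub (by omega)]
  have hmax : max ((x + 1 : ℝ) / x) ((N - x + 1 : ℝ) / (N - x)) = ((M : ℝ) + 1) / M := by
    rcases le_total x (N - x) with h | h
    · have hMx : (M : ℝ) = x := by rw [hM, min_eq_left h]
      rw [hMx, max_eq_left]
      rw [div_le_div_iff₀ hNx0 hx0]
      have hc : (x : ℝ) ≤ (N : ℝ) - x := by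
        rw [← hNxcast]; exact_mod_cast h
      nlinarith
    · have hMx : (M : ℝ) = (N : ℝ) - x := by rw [hM, min_eq_right h, hNxcast]
      rw [hMx, max_eq_right]
      rw [div_le_div_iff₀ hx0 hNx0]
      have hc : (N : ℝ) - x ≤ x := by
        rw [← hNxcast]; exact_mod_cast h
      nlinarith
  rw [hmax, gt_iff_lt, div_mul_eq_mul_div, div_mul_eq_mul_div, div_lt_iff₀ hMpos]
  calc ((M : ℝ) + 1) * poissonBinomialPmf p (x + 1) * poissonBinomialPmf p (x - 1)
      = ((M : ℝ) + 1) * (poissonBinomialPmf p (x + 1) * poissonBinomialPmf p (x - 1)) := by ring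
    _ < (M : ℝ) * (poissonBinomialPmf p x * poissonBinomialPmf p x) := hmain
    _ = poissonBinomialPmf p x ^ 2 * M := by ring
end

section
/- Let g be a log-concave pmf on {0,...,N} (i.e., g(x)^2 ≥ g(x-1)g(x+1) for 1 ≤ x ≤ N-1) with g(x) > 0 for all x, and let π ∈ [0,1]. Define f(x) = π·g(x-1) + (1-π)·g(x) (with g(-1) = 0). Then the ratio x ↦ g(x-1)/f(x) is nondecreasing on {1,...,N}. -/
/-- Monotone likelihood ratio after adding one Bernoulli(π) trial to a positive
log-concave pmf `g` on `{0,...,N}` (Lemma 1 of the paper, case `|A| = 1`). -/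
theorem ratio_monotone_of_log_concave (N : ℕ) (g : ℕ → ℝ)
    (hpos : ∀ x ≤ N, 0 < g x)
    (hlc : ∀ x, 1 ≤ x → x ≤ N - 1 → g (x - 1) * g (x + 1) ≤ (g x) ^ 2)
    (π : ℝ) (hπ : π ∈ Set.Icc (0 : ℝ) 1)
    (f : ℕ → ℝ) (hf : ∀ x, f x = π * (if x = 0 then 0 else g (x - 1)) + (1 - π) * g x) :
    ∀ x, 1 ≤ x → x + 1 ≤ N → g (x - 1) / f x ≤ g x / f (x + 1) := by
  intro x hx hxN
  obtain ⟨hπ0, hπ1⟩ := hπ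
  have hg1 : 0 < g (x - 1) := hpos _ (by omega)
  have hg2 : 0 < g x := hpos _ (by omega)
  have hg3 : 0 < g (x + 1) := hpos _ hxN
  have hfx : f x = π * g (x - 1) + (1 - π) * g x := by
    rw [hf]; have : x ≠ 0 := by omega
    simp [this]
  have hfx1 : f (x + 1) = π * g x + (1 - π) * g (x + 1) := by
    rw [hf]; simp
  have hfxpos : 0 < f x := by
    rw [hfx]
    rcases eq_or_lt_of_le hπ1 with h | h
    · nlinarith
    · nlinarith
  have hfx1pos : 0 < f (x + 1) := by
    rw [hfx1]
    rcases eq_or_lt_of_le hπ1 with h | h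
    · nlinarith
    · nlinarith
  rw [div_le_div_iff₀ hfxpos hfx1pos, hfx, hfx1]
  have := hlc x hx (by omega)
  nlinarith
end

section
/- Let f_N(·; π_1,...,π_N) denote the Poisson binomial pmf, and for a subset A ⊆ {1,...,N} let f̂_N(x; π_1,...,π_N, A) be the Poisson binomial pmf where π_i is replaced by 1 for i ∈ A. If all π_i ∈ (0,1), then for any nonempty A, the likelihood ratio λ^A(x) = f̂_N(x; π_1,...,π_N, A) / f_N(x; π_1,...,π_N) is nondecreasing in x on {0,1,...,N}. -/
open Finset


/-- Poisson binomial pmf where `p i` is replaced by `1` for `i ∈ A`. -/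
noncomputable def poissonBinomialPmfHat {N : ℕ} (p : Fin N → ℝ) (A : Finset (Fin N))
    (x : ℕ) : ℝ :=
  poissonBinomialPmf (fun i => if i ∈ A then 1 else p i) x


section


section
variable {ι : Type*} [DecidableEq ι]

def pb (p : ι → ℝ) (s : Finset ι) (x : ℕ) : ℝ :=
  ∑ S ∈ s.powersetCard x, (∏ i ∈ S, p i) * ∏ i ∈ s \ S, (1 - p i)

lemma pb_zero (p : ι → ℝ) (s : Finset ι) : pb p s 0 = ∏ i ∈ s, (1 - p i) := by
  simp [pb]

lemma pb_of_card_lt {p : ι → ℝ} {s : Finset ι} {x : ℕ} (h : s.card < x) : pb p s x = 0 := by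
  simp [pb, Finset.powersetCard_eq_empty.2 h]

lemma pb_nonneg {p : ι → ℝ} {s : Finset ι} (hp : ∀ i ∈ s, 0 ≤ p i ∧ p i ≤ 1) (x : ℕ) :
    0 ≤ pb p s x := by
  refine Finset.sum_nonneg fun S hS => ?_
  rw [Finset.mem_powersetCard] at hS
  refine mul_nonneg (Finset.prod_nonneg fun i hi => (hp i (hS.1 hi)).1)
    (Finset.prod_nonneg fun i hi => ?_)
  have := (hp i (Finset.mem_sdiff.1 hi).1).2
  linarith

lemma pb_pos {p : ι → ℝ} {s : Finset ι} (hp : ∀ i ∈ s, 0 < p i ∧ p i < 1) {x : ℕ}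
    (hx : x ≤ s.card) : 0 < pb p s x := by
  refine Finset.sum_pos (fun S hS => ?_) (Finset.powersetCard_nonempty.2 hx)
  rw [Finset.mem_powersetCard] at hS
  refine mul_pos (Finset.prod_pos fun i hi => (hp i (hS.1 hi)).1)
    (Finset.prod_pos fun i hi => ?_)
  have := (hp i (Finset.mem_sdiff.1 hi).1).2
  linarith

lemma pb_congr {p q : ι → ℝ} {s : Finset ι} (h : ∀ i ∈ s, p i = q i) (x : ℕ) :
    pb p s x = pb q s x := by
  refine Finset.sum_congr rfl fun S hS => ?_
  rw [Finset.mem_powersetCard] at hS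
  have h1 : ∏ i ∈ S, p i = ∏ i ∈ S, q i := Finset.prod_congr rfl fun i hi => h i (hS.1 hi)
  have h2 : ∏ i ∈ s \ S, (1 - p i) = ∏ i ∈ s \ S, (1 - q i) :=
    Finset.prod_congr rfl fun i hi => by rw [h i (Finset.mem_sdiff.1 hi).1]
  rw [h1, h2]

lemma pb_insert_zero {j : ι} {s : Finset ι} (hj : j ∉ s) (p : ι → ℝ) :
    pb p (insert j s) 0 = (1 - p j) * pb p s 0 := by
  rw [pb_zero, pb_zero, Finset.prod_insert hj]

lemma pb_insert {j : ι} {s : Finset ι} (hj : j ∉ s) (p : ι → ℝ) (x : ℕ) :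
    pb p (insert j s) (x + 1) = p j * pb p s x + (1 - p j) * pb p s (x + 1) := by
  unfold pb
  rw [Finset.powersetCard_succ_insert hj, Finset.sum_union, Finset.sum_image, Finset.mul_sum,
    Finset.mul_sum]
  · rw [add_comm]
    congr 1
    · -- sets containing j
      refine Finset.sum_congr rfl fun S hS => ?_
      rw [Finset.mem_powersetCard] at hS
      have hjS : j ∉ S := fun h => hj (hS.1 h)
      have h1 : insert j s \ insert j S = s \ S := by
        ext i; simp only [Finset.mem_sdiff, Finset.mem_insert, not_or]
        constructor
        · rintro ⟨h1 | h1, h2, h3⟩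
          · exact absurd h1 h2
          · exact ⟨h1, h3⟩
        · rintro ⟨h1, h2⟩
          exact ⟨Or.inr h1, fun h => hj (h ▸ h1), h2⟩
      rw [Finset.prod_insert hjS, h1]
      ring
    · -- sets not containing j
      refine Finset.sum_congr rfl fun S hS => ?_
      rw [Finset.mem_powersetCard] at hS
      have hjS : j ∉ S := fun h => hj (hS.1 h)
      have : insert j s \ S = insert j (s \ S) := by
        ext i; simp only [Finset.mem_sdiff, Finset.mem_insert]
        constructor
        · rintro ⟨h1 | h1, h2⟩
          · exact Or.inl h1
          · exact Or.inr ⟨h1, h2⟩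
        · rintro (rfl | ⟨h1, h2⟩)
          · exact ⟨Or.inl rfl, hjS⟩
          · exact ⟨Or.inr h1, h2⟩
      rw [this, Finset.prod_insert (fun h => hj (Finset.mem_sdiff.1 h).1)]
      ring
  · -- injectivity of insert j
    intro S hS T hT h
    rw [Finset.mem_coe, Finset.mem_powersetCard] at hS hT
    have key : ∀ U : Finset ι, U ⊆ s → (insert j U).erase j = U := fun U hU => by
      rw [Finset.erase_insert (fun h => hj (hU h))]
    rw [← key S hS.1, ← key T hT.1, h]
  · -- disjointness
    rw [Finset.disjoint_left]
    intro S hS hS'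
    rw [Finset.mem_powersetCard] at hS
    rw [Finset.mem_image] at hS'
    obtain ⟨T, hT, rfl⟩ := hS'
    exact hj (hS.1 (Finset.mem_insert_self j T))

/-- From log-concavity, positivity in range and vanishing out of range:
products of consecutive values dominate. -/
lemma consec_aux {h : ℕ → ℝ} {m : ℕ} (hnn : ∀ x, 0 ≤ h x)
    (hpos : ∀ x ≤ m, 0 < h x) (hz : ∀ x, m < x → h x = 0)
    (hLC : ∀ x, h x * h (x + 2) ≤ h (x + 1) * h (x + 1)) (y : ℕ) :
    h y * h (y + 3) ≤ h (y + 1) * h (y + 2) := by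
  by_cases hy : y + 2 ≤ m
  · have p1 := hpos (y + 1) (by omega)
    have p2 := hpos (y + 2) hy
    have key : (h y * h (y + 3)) * (h (y + 1) * h (y + 2)) ≤
        (h (y + 1) * h (y + 2)) * (h (y + 1) * h (y + 2)) := by
      nlinarith [mul_le_mul (hLC y) (hLC (y + 1)) (mul_nonneg (hnn _) (hnn _))
        (mul_nonneg (hnn _) (hnn _))]
    exact le_of_mul_le_mul_right key (mul_pos p1 p2)
  · rw [hz (y + 3) (by omega), mul_zero]
    exact mul_nonneg (hnn _) (hnn _)

lemma pb_logConcave {p : ι → ℝ} {s : Finset ι} (hp : ∀ i ∈ s, 0 < p i ∧ p i < 1) (x : ℕ) :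
    pb p s x * pb p s (x + 2) ≤ pb p s (x + 1) * pb p s (x + 1) := by
  induction s using Finset.induction_on generalizing x with
  | empty =>
    rw [pb_of_card_lt (show (∅ : Finset ι).card < x + 2 by simp),
      pb_of_card_lt (show (∅ : Finset ι).card < x + 1 by simp)]
    simp
  | @insert j t hj IH =>
    have hpt : ∀ i ∈ t, 0 < p i ∧ p i < 1 := fun i hi => hp i (Finset.mem_insert_of_mem hi)
    have hq := hp j (Finset.mem_insert_self j t)
    have hnn : ∀ y, 0 ≤ pb p t y :=
      pb_nonneg fun i hi => ⟨(hpt i hi).1.le, (hpt i hi).2.le⟩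
    have hcons : ∀ y, pb p t y * pb p t (y + 3) ≤ pb p t (y + 1) * pb p t (y + 2) :=
      consec_aux hnn (fun z hz => pb_pos hpt hz) (fun z hz => pb_of_card_lt hz) (IH hpt)
    cases x with
    | zero =>
      rw [pb_insert_zero hj, pb_insert hj p 0, pb_insert hj p 1]
      have k1 : 0 ≤ (1 - p j) ^ 2 * (pb p t 1 * pb p t 1 - pb p t 0 * pb p t 2) :=
        mul_nonneg (sq_nonneg _) (sub_nonneg.2 (IH hpt 0))
      nlinarith [mul_nonneg (mul_nonneg hq.1.le (sub_nonneg.2 hq.2.le))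
          (mul_nonneg (hnn 0) (hnn 1)),
        mul_nonneg (mul_nonneg hq.1.le hq.1.le) (mul_nonneg (hnn 0) (hnn 0)), k1]
    | succ y =>
      rw [pb_insert hj p y, pb_insert hj p (y + 1), pb_insert hj p (y + 2)]
      have k1 : 0 ≤ p j ^ 2 * (pb p t (y + 1) * pb p t (y + 1) - pb p t y * pb p t (y + 2)) :=
        mul_nonneg (sq_nonneg _) (sub_nonneg.2 (IH hpt y))
      have k2 : 0 ≤ (1 - p j) ^ 2 *
          (pb p t (y + 2) * pb p t (y + 2) - pb p t (y + 1) * pb p t (y + 3)) :=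
        mul_nonneg (sq_nonneg _) (sub_nonneg.2 (IH hpt (y + 1)))
      have k3 : 0 ≤ (p j * (1 - p j)) *
          (pb p t (y + 1) * pb p t (y + 2) - pb p t y * pb p t (y + 3)) :=
        mul_nonneg (mul_nonneg hq.1.le (sub_nonneg.2 hq.2.le)) (sub_nonneg.2 (hcons y))
      nlinarith [k1, k2, k3]
lemma pb_ones_shift {q : ι → ℝ} :
    ∀ (A s : Finset ι), A ⊆ s → (∀ i ∈ A, q i = 1) → ∀ y,
      pb q s (A.card + y) = pb q (s \ A) y := by
  intro A
  induction A using Finset.induction_on with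
  | empty => intro s _ _ y; simp
  | @insert j B hjB IH =>
    intro s hsub h1 y
    have hjs : j ∈ s := hsub (Finset.mem_insert_self j B)
    have hsj : s = insert j (s.erase j) := (Finset.insert_erase hjs).symm
    have hje : j ∉ s.erase j := Finset.notMem_erase j s
    have hcard : (insert j B).card = B.card + 1 := Finset.card_insert_of_notMem hjB
    have hBsub : B ⊆ s.erase j := fun i hi => Finset.mem_erase.2
      ⟨fun h => hjB (h ▸ hi), hsub (Finset.mem_insert_of_mem hi)⟩
    have hset : s.erase j \ B = s \ insert j B := by
      ext i
      simp only [Finset.mem_sdiff, Finset.mem_erase, Finset.mem_insert, not_or]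
      tauto
    calc pb q s ((insert j B).card + y)
        = pb q (insert j (s.erase j)) (B.card + y + 1) := by
          rw [← hsj, hcard]; ring_nf
      _ = q j * pb q (s.erase j) (B.card + y) +
          (1 - q j) * pb q (s.erase j) (B.card + y + 1) := pb_insert hje q _
      _ = pb q (s.erase j) (B.card + y) := by
          rw [h1 j (Finset.mem_insert_self j B)]; ring
      _ = pb q (s \ insert j B) y := by
          rw [IH (s.erase j) hBsub (fun i hi => h1 i (Finset.mem_insert_of_mem hi)) y, hset]

lemma pb_ones_vanish {q : ι → ℝ} :
    ∀ (A s : Finset ι), A ⊆ s → (∀ i ∈ A, q i = 1) → ∀ x < A.card, pb q s x = 0 := by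
  intro A
  induction A using Finset.induction_on with
  | empty => intro s _ _ x hx; simp at hx
  | @insert j B hjB IH =>
    intro s hsub h1 x hx
    have hjs : j ∈ s := hsub (Finset.mem_insert_self j B)
    have hsj : s = insert j (s.erase j) := (Finset.insert_erase hjs).symm
    have hje : j ∉ s.erase j := Finset.notMem_erase j s
    have hq1 : q j = 1 := h1 j (Finset.mem_insert_self j B)
    cases x with
    | zero =>
      rw [pb_zero]
      exact Finset.prod_eq_zero hjs (by rw [hq1]; ring)
    | succ x =>
      rw [hsj, pb_insert hje q x, hq1]
      have hBsub : B ⊆ s.erase j := fun i hi => Finset.mem_erase.2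
        ⟨fun h => hjB (h ▸ hi), hsub (Finset.mem_insert_of_mem hi)⟩
      rw [Finset.card_insert_of_notMem hjB] at hx
      rw [IH (s.erase j) hBsub (fun i hi => h1 i (Finset.mem_insert_of_mem hi)) x (by omega)]
      ring

lemma pb_key {q : ι → ℝ} {s : Finset ι} (hq : ∀ i ∈ s, 0 < q i ∧ q i < 1) :
    ∀ (B : Finset ι), B ⊆ s → ∀ y, y + 1 + B.card ≤ s.card →
      pb q (s \ B) y * pb q s (B.card + y + 1) ≤
        pb q (s \ B) (y + 1) * pb q s (B.card + y) := by
  intro B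
  induction B using Finset.induction_on with
  | empty => intro _ y _; simp [mul_comm]
  | @insert j B hjB IH =>
    intro hsub y hcard
    have hjs : j ∈ s := hsub (Finset.mem_insert_self j B)
    have hBsub : B ⊆ s := fun i hi => hsub (Finset.mem_insert_of_mem hi)
    have hjsB : j ∉ s \ insert j B := fun h =>
      (Finset.mem_sdiff.1 h).2 (Finset.mem_insert_self j B)
    have hset : s \ B = insert j (s \ insert j B) := by
      ext i
      simp only [Finset.mem_sdiff, Finset.mem_insert, not_or]
      constructor
      · rintro ⟨h1, h2⟩
        by_cases hij : i = j
        · exact Or.inl hij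
        · exact Or.inr ⟨h1, hij, h2⟩
      · rintro (rfl | ⟨h1, _, h3⟩)
        · exact ⟨hjs, hjB⟩
        · exact ⟨h1, h3⟩
    set G := pb q (s \ insert j B) with hG
    set H := pb q (s \ B) with hH
    have hins : ∀ z, H (z + 1) = q j * G z + (1 - q j) * G (z + 1) := fun z => by
      rw [hH, hset]; exact pb_insert hjsB q z
    have hqj := hq j hjs
    have hq' : ∀ i ∈ s \ insert j B, 0 < q i ∧ q i < 1 :=
      fun i hi => hq i (Finset.mem_sdiff.1 hi).1
    have hq'' : ∀ i ∈ s \ B, 0 < q i ∧ q i < 1 := fun i hi => hq i (Finset.mem_sdiff.1 hi).1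
    have Gnn : ∀ z, 0 ≤ G z := pb_nonneg fun i hi => ⟨(hq' i hi).1.le, (hq' i hi).2.le⟩
    have Fnn : ∀ z, 0 ≤ pb q s z := pb_nonneg fun i hi => ⟨(hq i hi).1.le, (hq i hi).2.le⟩
    have hci : (insert j B).card = B.card + 1 := Finset.card_insert_of_notMem hjB
    have step1 : G y * H (y + 2) ≤ G (y + 1) * H (y + 1) := by
      rw [hins (y + 1), hins y]
      have k : 0 ≤ (1 - q j) * (G (y + 1) * G (y + 1) - G y * G (y + 2)) :=
        mul_nonneg (by linarith [hqj.2]) (sub_nonneg.2 (pb_logConcave hq' y))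
      nlinarith [k]
    have step2 : H (y + 1) * pb q s (B.card + (y + 1) + 1) ≤
        H (y + 2) * pb q s (B.card + (y + 1)) := by
      have := IH hBsub (y + 1) (by omega)
      convert this using 3 <;> omega
    have Hpos : 0 < H (y + 2) := by
      refine pb_pos hq'' ?_
      rw [Finset.card_sdiff_of_subset hBsub]
      have := Finset.card_le_card hBsub
      omega
    have e1 : (insert j B).card + y + 1 = B.card + (y + 1) + 1 := by omega
    have e2 : (insert j B).card + y = B.card + (y + 1) := by omega
    rw [e1, e2]
    have big : H (y + 2) * (G y * pb q s (B.card + (y + 1) + 1)) ≤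
        H (y + 2) * (G (y + 1) * pb q s (B.card + (y + 1))) := by
      nlinarith [mul_le_mul_of_nonneg_right step1 (Fnn (B.card + (y + 1) + 1)),
        mul_le_mul_of_nonneg_left step2 (Gnn (y + 1))]
    exact le_of_mul_le_mul_left big Hpos

end

lemma poissonBinomialPmf_eq_pb {N : ℕ} (p : Fin N → ℝ) (x : ℕ) :
    poissonBinomialPmf p x = pb p Finset.univ x := by
  unfold poissonBinomialPmf pb
  refine Finset.sum_congr rfl fun S _ => ?_
  rw [Finset.compl_eq_univ_sdiff]

/-- Lemma 1 of the paper: the likelihood ratio `λ^A` is nondecreasing in `x`. -/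
theorem likelihood_ratio_monotone {N : ℕ} (p : Fin N → ℝ)
    (hp : ∀ i, p i ∈ Set.Ioo (0 : ℝ) 1) (A : Finset (Fin N)) (hA : A.Nonempty) :
    ∀ x, x + 1 ≤ N →
      poissonBinomialPmfHat p A x / poissonBinomialPmf p x ≤
        poissonBinomialPmfHat p A (x + 1) / poissonBinomialPmf p (x + 1) := by
  intro x hx
  set q : Fin N → ℝ := fun i => if i ∈ A then 1 else p i with hqdef
  have hcu : (Finset.univ : Finset (Fin N)).card = N := by simp
  have hps : ∀ i ∈ (Finset.univ : Finset (Fin N)), 0 < p i ∧ p i < 1 :=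
    fun i _ => ⟨(hp i).1, (hp i).2⟩
  have hq01 : ∀ i ∈ (Finset.univ : Finset (Fin N)), 0 ≤ q i ∧ q i ≤ 1 := by
    intro i _
    by_cases h : i ∈ A <;> simp [hqdef, h, (hp i).1.le, (hp i).2.le]
  have hA1 : ∀ i ∈ A, q i = 1 := fun i hi => by simp [hqdef, hi]
  have hAsub : A ⊆ Finset.univ := Finset.subset_univ A
  have hhat : ∀ z, poissonBinomialPmfHat p A z = pb q Finset.univ z := fun z =>
    poissonBinomialPmf_eq_pb _ z
  have hfx : 0 < poissonBinomialPmf p x := by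
    rw [poissonBinomialPmf_eq_pb]; exact pb_pos hps (by omega)
  have hfx1 : 0 < poissonBinomialPmf p (x + 1) := by
    rw [poissonBinomialPmf_eq_pb]; exact pb_pos hps (by omega)
  rw [div_le_div_iff₀ hfx hfx1]
  rcases lt_or_ge x A.card with hlt | hge
  · rw [hhat, pb_ones_vanish A Finset.univ hAsub hA1 x hlt, zero_mul]
    exact mul_nonneg (hhat (x + 1) ▸ pb_nonneg hq01 (x + 1)) hfx.le
  · obtain ⟨y, rfl⟩ : ∃ y, x = A.card + y := ⟨x - A.card, by omega⟩
    have hagree : ∀ i ∈ Finset.univ \ A, q i = p i := fun i hi => by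
      simp [hqdef, (Finset.mem_sdiff.1 hi).2]
    have h1 : poissonBinomialPmfHat p A (A.card + y) = pb p (Finset.univ \ A) y := by
      rw [hhat, pb_ones_shift A Finset.univ hAsub hA1 y, pb_congr hagree]
    have h2 : poissonBinomialPmfHat p A (A.card + y + 1) = pb p (Finset.univ \ A) (y + 1) := by
      rw [hhat, show A.card + y + 1 = A.card + (y + 1) by omega,
        pb_ones_shift A Finset.univ hAsub hA1 (y + 1), pb_congr hagree]
    rw [h1, h2, poissonBinomialPmf_eq_pb, poissonBinomialPmf_eq_pb]
    exact pb_key hps A hAsub y (by omega)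
end
end

section
/- (Neyman–Pearson sufficiency, discrete case) Let f₀ and f₁ be pmfs on a finite set X, let k ≥ 0, and let R ⊆ X satisfy: f₁(x) > k·f₀(x) for all x ∈ R, and f₁(x) < k·f₀(x) for all x ∉ R. Set α = Σ_{x∈R} f₀(x). Then for any test region R' with Σ_{x∈R'} f₀(x) ≤ α, we have Σ_{x∈R'} f₁(x) ≤ Σ_{x∈R} f₁(x); i.e., R is a most powerful level-α test of f₀ versus f₁. -/
open Finset

/-- Neyman–Pearson sufficiency, discrete case: a likelihood-ratio region is a
most powerful test at its own level. -/
theorem neyman_pearson_sufficiency {X : Type*} [Fintype X] [DecidableEq X]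
    (f₀ f₁ : X → ℝ)
    (h₀nonneg : ∀ x, 0 ≤ f₀ x) (h₀pmf : ∑ x, f₀ x = 1)
    (h₁nonneg : ∀ x, 0 ≤ f₁ x) (h₁pmf : ∑ x, f₁ x = 1)
    (k : ℝ) (hk : 0 ≤ k) (R : Finset X)
    (hR : ∀ x ∈ R, f₁ x > k * f₀ x)
    (hRc : ∀ x ∉ R, f₁ x < k * f₀ x) :
    ∀ R' : Finset X, (∑ x ∈ R', f₀ x) ≤ ∑ x ∈ R, f₀ x →
      (∑ x ∈ R', f₁ x) ≤ ∑ x ∈ R, f₁ x := by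
  intro R' hlevel
  have key : ∀ (f : X → ℝ), ∑ x ∈ R', f x - ∑ x ∈ R, f x
      = ∑ x ∈ R' \ R, f x - ∑ x ∈ R \ R', f x := by
    intro f
    rw [← sum_inter_add_sum_sdiff R' R f, ← sum_inter_add_sum_sdiff R R' f, inter_comm]
    ring
  have h1 : ∑ x ∈ R' \ R, f₁ x ≤ ∑ x ∈ R' \ R, k * f₀ x := by
    apply sum_le_sum
    intro x hx
    exact le_of_lt (hRc x (mem_sdiff.mp hx).2)
  have h2 : ∑ x ∈ R \ R', k * f₀ x ≤ ∑ x ∈ R \ R', f₁ x := by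
    apply sum_le_sum
    intro x hx
    exact le_of_lt (hR x (mem_sdiff.mp hx).1)
  have := key f₁
  have h0 := key f₀
  have hk0 : k * (∑ x ∈ R', f₀ x - ∑ x ∈ R, f₀ x) ≤ 0 :=
    mul_nonpos_of_nonneg_of_nonpos hk (by linarith)
  have : ∑ x ∈ R', f₁ x - ∑ x ∈ R, f₁ x
      ≤ ∑ x ∈ R' \ R, k * f₀ x - ∑ x ∈ R \ R', k * f₀ x := by
    rw [key f₁]; linarith
  have hmul : ∑ x ∈ R' \ R, k * f₀ x - ∑ x ∈ R \ R', k * f₀ x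
      = k * (∑ x ∈ R', f₀ x - ∑ x ∈ R, f₀ x) := by
    rw [← mul_sum, ← mul_sum, ← mul_sub, ← key f₀]
  linarith
end

section
/- (Benjamini–Hochberg FDR control under independence) Let p_1 ≤ p_2 ≤ ... ≤ p_m be the ordered p-values of m hypotheses, of which m₀ are true nulls with independent p-values uniformly distributed on [0,1]. Let k = max{ i : p_i ≤ (i/m)·q } (k = 0 if no such i), and reject the hypotheses corresponding to p_1,...,p_k. Then the expected false discovery proportion satisfies E[V / max(R,1)] ≤ (m₀/m)·q ≤ q, where V is the number of true nulls rejected and R = k is the total number rejected. -/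
open MeasureTheory ProbabilityTheory Finset
open scoped Classical

/-- Number of rejections of the Benjamini–Hochberg step-up procedure at level `q`:
the largest `k` such that at least `k` of the p-values are `≤ k·q/m`
(equivalently, the largest `k` with `p_(k) ≤ (k/m)·q` for the ordered p-values). -/
noncomputable def bhNumRejections (m : ℕ) (q : ℝ) (pv : Fin m → ℝ) : ℕ :=
  ((Finset.range (m + 1)).filter
    (fun k : ℕ => k ≤ ((Finset.univ : Finset (Fin m)).filter
      (fun i => pv i ≤ (k : ℝ) * q / m)).card)).sup id

namespace BHAux

variable {m : ℕ} {q : ℝ}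

lemma bh_mem (pv : Fin m → ℝ) : bhNumRejections m q pv ∈
    ((Finset.range (m + 1)).filter
      (fun k : ℕ => k ≤ ((Finset.univ : Finset (Fin m)).filter
        (fun i => pv i ≤ (k : ℝ) * q / m)).card)) := by
  have hne : ((Finset.range (m + 1)).filter
      (fun k : ℕ => k ≤ ((Finset.univ : Finset (Fin m)).filter
        (fun i => pv i ≤ (k : ℝ) * q / m)).card)).Nonempty := ⟨0, by simp⟩
  obtain ⟨b, hb, hbe⟩ := Finset.exists_mem_eq_sup _ hne id
  rw [bhNumRejections, hbe]
  exact hb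

lemma bh_le_m (pv : Fin m → ℝ) : bhNumRejections m q pv ≤ m := by
  have := bh_mem (q := q) pv
  rw [Finset.mem_filter, Finset.mem_range] at this
  omega

lemma bh_le_card (pv : Fin m → ℝ) : bhNumRejections m q pv ≤
    ((Finset.univ : Finset (Fin m)).filter
      (fun i => pv i ≤ (bhNumRejections m q pv : ℝ) * q / m)).card :=
  (Finset.mem_filter.1 (bh_mem pv)).2

lemma le_bh {pv : Fin m → ℝ} {k : ℕ} (hk : k ≤ m)
    (h : k ≤ ((Finset.univ : Finset (Fin m)).filter
      (fun i => pv i ≤ (k : ℝ) * q / m)).card) : k ≤ bhNumRejections m q pv :=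
  Finset.le_sup (f := id) (Finset.mem_filter.2 ⟨Finset.mem_range.2 (by omega), h⟩)

lemma thr_mono (hq : 0 ≤ q) {r s : ℕ} (h : r ≤ s) : (r : ℝ) * q / m ≤ (s : ℝ) * q / m := by
  gcongr

lemma thr_nonneg (hq : 0 ≤ q) (k : ℕ) : (0:ℝ) ≤ (k : ℝ) * q / m := by positivity

lemma card_update_eq {pv : Fin m → ℝ} {i : Fin m} {c : ℝ} (hc : (0:ℝ) ≤ c) (hi : pv i ≤ c) :
    ((Finset.univ : Finset (Fin m)).filter (fun j => Function.update pv i 0 j ≤ c)).card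
      = ((Finset.univ : Finset (Fin m)).filter (fun j => pv j ≤ c)).card := by
  congr 1
  apply Finset.filter_congr
  intro j _
  by_cases hji : j = i
  · subst hji; rw [Function.update_self]; exact iff_of_true hc hi
  · rw [Function.update_of_ne hji]

lemma bh_update_eq (hq : 0 ≤ q) {pv : Fin m → ℝ} {i : Fin m}
    (hi : pv i ≤ (bhNumRejections m q pv : ℝ) * q / m) :
    bhNumRejections m q (Function.update pv i 0) = bhNumRejections m q pv := by
  have hcard : ∀ k : ℕ, bhNumRejections m q pv ≤ k →
      ((Finset.univ : Finset (Fin m)).filter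
        (fun j => Function.update pv i 0 j ≤ (k:ℝ)*q/m)).card
        = ((Finset.univ : Finset (Fin m)).filter (fun j => pv j ≤ (k:ℝ)*q/m)).card := by
    intro k hk
    exact card_update_eq (thr_nonneg hq k) (hi.trans (thr_mono hq hk))
  apply le_antisymm
  · by_contra hlt
    push_neg at hlt
    have h1 := bh_le_card (q := q) (Function.update pv i 0)
    rw [hcard _ hlt.le] at h1
    exact absurd (le_bh (bh_le_m _) h1) (by omega)
  · apply le_bh (bh_le_m _)
    rw [hcard _ le_rfl]
    exact bh_le_card pv

lemma bh_of_update_eq (hq : 0 ≤ q) {pv : Fin m → ℝ} {i : Fin m} {r : ℕ}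
    (hr : bhNumRejections m q (Function.update pv i 0) = r)
    (hi : pv i ≤ (r : ℝ) * q / m) :
    bhNumRejections m q pv = r := by
  apply le_antisymm
  · by_contra hlt
    push_neg at hlt
    have hc : ((Finset.univ : Finset (Fin m)).filter
        (fun j => Function.update pv i 0 j ≤ (bhNumRejections m q pv : ℝ)*q/m)).card
        = ((Finset.univ : Finset (Fin m)).filter
          (fun j => pv j ≤ (bhNumRejections m q pv : ℝ)*q/m)).card :=
      card_update_eq (thr_nonneg hq _) (hi.trans (thr_mono hq hlt.le))
    have h1 := bh_le_card (q := q) pv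
    rw [← hc] at h1
    have := le_bh (q := q) (pv := Function.update pv i 0) (bh_le_m pv) h1
    omega
  · apply le_bh (hr ▸ bh_le_m (q := q) (Function.update pv i 0))
    have h1 := bh_le_card (q := q) (Function.update pv i 0)
    rw [hr, card_update_eq (thr_nonneg hq r) hi] at h1
    exact h1

lemma bh_one_le (hm : 0 < m) (hq : 0 ≤ q) {pv : Fin m → ℝ} {i : Fin m}
    (hi : pv i ≤ (bhNumRejections m q pv : ℝ) * q / m) :
    1 ≤ bhNumRejections m q pv := by
  by_contra h
  push_neg at h
  have h0 : bhNumRejections m q pv = 0 := by omega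
  rw [h0] at hi
  simp only [Nat.cast_zero, zero_mul, zero_div] at hi
  have h1 : pv i ≤ ((1:ℕ) : ℝ) * q / m := hi.trans (thr_nonneg hq 1)
  have hcard : 1 ≤ ((Finset.univ : Finset (Fin m)).filter
      (fun j => pv j ≤ ((1:ℕ) : ℝ) * q / m)).card :=
    Finset.card_pos.2 ⟨i, Finset.mem_filter.2 ⟨Finset.mem_univ i, h1⟩⟩
  have := le_bh (q := q) hm hcard
  omega

lemma sup_filter_eq (s : Finset ℕ) (p : ℕ → Prop) [DecidablePred p] :
    (s.filter p).sup id = s.sup (fun k => if p k then k else 0) := by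
  apply le_antisymm
  · apply Finset.sup_le
    intro b hb
    rcases Finset.mem_filter.1 hb with ⟨hbs, hpb⟩
    exact le_trans (by simp [hpb]) (Finset.le_sup (f := fun k => if p k then k else 0) hbs)
  · apply Finset.sup_le
    intro b hb
    by_cases hpb : p b
    · simpa [hpb] using Finset.le_sup (f := id) (Finset.mem_filter.2 ⟨hb, hpb⟩)
    · simp [hpb]

lemma measurable_finset_sup {α : Type*} [MeasurableSpace α] (s : Finset ℕ)
    (g : ℕ → α → ℕ) (hg : ∀ k, Measurable (g k)) :
    Measurable (fun x => s.sup (fun k => g k x)) := by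
  induction s using Finset.induction_on with
  | empty => simp only [Finset.sup_empty]; exact measurable_const
  | insert _ _ h ih => simp only [Finset.sup_insert]; exact (hg _).max ih

lemma measurable_bh (m : ℕ) (q : ℝ) : Measurable (bhNumRejections m q) := by
  have hN : ∀ k : ℕ, Measurable (fun pv : Fin m → ℝ =>
      ((Finset.univ : Finset (Fin m)).filter (fun i => pv i ≤ (k : ℝ) * q / m)).card) := by
    intro k
    simp_rw [Finset.card_filter]
    exact Finset.measurable_sum _ fun i _ =>
      Measurable.ite (measurableSet_le (measurable_pi_apply i) measurable_const)
        measurable_const measurable_const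
  have heq : bhNumRejections m q = fun pv => (Finset.range (m+1)).sup
      (fun k => if k ≤ ((Finset.univ : Finset (Fin m)).filter
        (fun i => pv i ≤ (k : ℝ) * q / m)).card then k else 0) := by
    funext pv
    exact sup_filter_eq _ _
  rw [heq]
  apply measurable_finset_sup
  intro k
  exact Measurable.ite (measurableSet_le measurable_const (hN k)) measurable_const
    measurable_const

lemma indep_combine {Ω : Type*} {m0 : MeasurableSpace Ω} {μ : Measure Ω}
    [IsProbabilityMeasure μ] {mA mB mC : MeasurableSpace Ω}
    (hA : mA ≤ m0) (hB : mB ≤ m0) (hC : mC ≤ m0)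
    (hAB : Indep mA mB μ) (hABC : Indep (mA ⊔ mB) mC μ) :
    Indep mA (mB ⊔ mC) μ := by
  set p1 : Set (Set Ω) := {s | MeasurableSet[mA] s} with hp1def
  set p2 : Set (Set Ω) := {s | ∃ b c, MeasurableSet[mB] b ∧ MeasurableSet[mC] c ∧ s = b ∩ c}
    with hp2def
  have hpi1 : IsPiSystem p1 := fun s hs t ht _ => hs.inter ht
  have hpi2 : IsPiSystem p2 := by
    rintro s ⟨b, c, hb, hc, rfl⟩ t ⟨b', c', hb', hc', rfl⟩ _
    exact ⟨b ∩ b', c ∩ c', hb.inter hb', hc.inter hc',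
      by rw [Set.inter_inter_inter_comm]⟩
  have hgen1 : mA = MeasurableSpace.generateFrom p1 :=
    (@MeasurableSpace.generateFrom_measurableSet Ω mA).symm
  have hgen2 : mB ⊔ mC = MeasurableSpace.generateFrom p2 := by
    apply le_antisymm
    · apply sup_le
      · intro s hs
        exact MeasurableSpace.measurableSet_generateFrom
          ⟨s, Set.univ, hs, MeasurableSet.univ, by simp⟩
      · intro s hs
        exact MeasurableSpace.measurableSet_generateFrom
          ⟨Set.univ, s, MeasurableSet.univ, hs, by simp⟩
    · apply MeasurableSpace.generateFrom_le
      rintro s ⟨b, c, hb, hc, rfl⟩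
      exact (show MeasurableSet[mB ⊔ mC] b from (le_sup_left : mB ≤ mB ⊔ mC) b hb).inter
        ((le_sup_right : mC ≤ mB ⊔ mC) c hc)
  apply ProbabilityTheory.IndepSets.indep hA (sup_le hB hC) hpi1 hpi2 hgen1 hgen2
  rw [ProbabilityTheory.IndepSets_iff]
  rintro a s ha ⟨b, c, hb, hc, rfl⟩
  have hbc : μ (b ∩ c) = μ b * μ c :=
    (ProbabilityTheory.Indep_iff _ _ _).1 hABC b c
      ((le_sup_right : mB ≤ mA ⊔ mB) b hb) hc
  have habc : μ (a ∩ b ∩ c) = μ (a ∩ b) * μ c :=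
    (ProbabilityTheory.Indep_iff _ _ _).1 hABC (a ∩ b) c
      ((show MeasurableSet[mA ⊔ mB] a from (le_sup_left : mA ≤ mA ⊔ mB) a ha).inter
        ((le_sup_right : mB ≤ mA ⊔ mB) b hb)) hc
  have hab : μ (a ∩ b) = μ a * μ b :=
    (ProbabilityTheory.Indep_iff _ _ _).1 hAB a b ha hb
  calc μ (a ∩ (b ∩ c)) = μ (a ∩ b ∩ c) := by rw [Set.inter_assoc]
    _ = μ a * μ b * μ c := by rw [habc, hab]
    _ = μ a * μ (b ∩ c) := by rw [hbc, mul_assoc]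

lemma indep_pv_W {Ω : Type*} [MeasureSpace Ω] [IsProbabilityMeasure (ℙ : Measure Ω)]
    {m : ℕ} (pv : Fin m → Ω → ℝ) (hmeas : ∀ i, Measurable (pv i))
    (T : Finset (Fin m))
    (hnullIndep : iIndepFun (fun i : T => pv (i : Fin m)) ℙ)
    (hcross : IndepFun (fun ω => fun i : T => pv (i : Fin m) ω)
      (fun ω => fun j : {j : Fin m // j ∉ T} => pv (j : Fin m) ω) ℙ)
    {i : Fin m} (hi : i ∈ T) (c : ℝ) (S : Set (Fin m → ℝ)) (hS : MeasurableSet S) :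
    ℙ ({ω | pv i ω ≤ c} ∩ (fun ω => Function.update (fun j => pv j ω) i 0) ⁻¹' S)
      = ℙ {ω | pv i ω ≤ c} * ℙ ((fun ω => Function.update (fun j => pv j ω) i 0) ⁻¹' S) := by
  set ti : ↥T := ⟨i, hi⟩ with hti
  set X : Ω → (↥T → ℝ) := fun ω (j : ↥T) => pv j ω with hX
  set Y : Ω → ({j : Fin m // j ∉ T} → ℝ) := fun ω j => pv j ω with hY
  set S2 : Finset ↥T := Finset.univ.erase ti with hS2
  set B : Ω → (↥S2 → ℝ) := fun ω (j : ↥S2) => pv ((j : ↥T) : Fin m) ω with hB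
  set W : Ω → (Fin m → ℝ) := fun ω => Function.update (fun j => pv j ω) i 0 with hW
  have hXm : Measurable X := measurable_pi_lambda _ fun j => hmeas j
  have hBm : Measurable B := measurable_pi_lambda _ fun j => hmeas _
  have hYm : Measurable Y := measurable_pi_lambda _ fun j => hmeas _
  have hdisj : Disjoint ({ti} : Finset ↥T) S2 := by
    simp [hS2, Finset.disjoint_left]
  have hAB' := (hnullIndep.indepFun_finset {ti} S2 hdisj (fun j => hmeas j)).comp
    (measurable_pi_apply (⟨ti, Finset.mem_singleton_self ti⟩ : ↥({ti} : Finset ↥T)))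
    measurable_id
  have hAB'' : IndepFun (pv i) B ℙ := hAB'
  have hAB : Indep (MeasurableSpace.comap (pv i) inferInstance)
      (MeasurableSpace.comap B inferInstance) ℙ := (IndepFun_iff_Indep _ _ _).1 hAB''
  have hXc : Indep (MeasurableSpace.comap X inferInstance)
      (MeasurableSpace.comap Y inferInstance) ℙ := (IndepFun_iff_Indep _ _ _).1 hcross
  have hAle : MeasurableSpace.comap (pv i) inferInstance
      ≤ MeasurableSpace.comap X inferInstance := by
    rw [show pv i = (fun v : ↥T → ℝ => v ti) ∘ X from rfl, ← MeasurableSpace.comap_comp]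
    exact MeasurableSpace.comap_mono ((measurable_pi_apply ti).comap_le)
  have hBle : MeasurableSpace.comap B inferInstance
      ≤ MeasurableSpace.comap X inferInstance := by
    rw [show B = (fun v : ↥T → ℝ => fun j : ↥S2 => v (j : ↥T)) ∘ X from rfl,
      ← MeasurableSpace.comap_comp]
    exact MeasurableSpace.comap_mono
      ((measurable_pi_lambda _ fun j => measurable_pi_apply _).comap_le)
  have hABC : Indep ((MeasurableSpace.comap (pv i) inferInstance : MeasurableSpace Ω)
      ⊔ MeasurableSpace.comap B inferInstance) (MeasurableSpace.comap Y inferInstance) ℙ := by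
    rw [ProbabilityTheory.Indep_iff] at hXc ⊢
    intro t1 t2 h1 h2
    exact hXc t1 t2 (MeasurableSpace.le_def.1 (sup_le hAle hBle) t1 h1) h2
  have hfinal : Indep (MeasurableSpace.comap (pv i) inferInstance)
      ((MeasurableSpace.comap B inferInstance : MeasurableSpace Ω)
        ⊔ MeasurableSpace.comap Y inferInstance) ℙ :=
    indep_combine ((hmeas i).comap_le) hBm.comap_le hYm.comap_le hAB hABC
  have hWm : @Measurable Ω (Fin m → ℝ)
      ((MeasurableSpace.comap B inferInstance : MeasurableSpace Ω)
        ⊔ MeasurableSpace.comap Y inferInstance) _ W := by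
    letI mω : MeasurableSpace Ω := (MeasurableSpace.comap B inferInstance : MeasurableSpace Ω)
        ⊔ MeasurableSpace.comap Y inferInstance
    apply measurable_pi_lambda
    intro j
    by_cases hji : j = i
    · subst hji
      have h0 : (fun ω => W ω j) = fun _ => (0:ℝ) := by
        funext ω; simp [hW, Function.update_self]
      rw [h0]; exact measurable_const
    by_cases hjT : j ∈ T
    · have hmem : (⟨j, hjT⟩ : ↥T) ∈ S2 := by
        simp [hS2, hti, Finset.mem_erase, Subtype.ext_iff, hji]
      have heq : (fun ω => W ω j) = (fun v : ↥S2 → ℝ => v ⟨⟨j, hjT⟩, hmem⟩) ∘ B := by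
        funext ω; simp [hW, hB, Function.update_of_ne hji]
      rw [heq]
      have hBmB : @Measurable Ω (↥S2 → ℝ) (MeasurableSpace.comap B inferInstance) _ B :=
        measurable_iff_comap_le.2 le_rfl
      exact ((measurable_pi_apply _).comp hBmB).mono le_sup_left le_rfl
    · have heq : (fun ω => W ω j) = (fun v : {j : Fin m // j ∉ T} → ℝ => v ⟨j, hjT⟩) ∘ Y := by
        funext ω; simp [hW, hY, Function.update_of_ne hji]
      rw [heq]
      have hYmC : @Measurable Ω _ (MeasurableSpace.comap Y inferInstance) _ Y :=
        measurable_iff_comap_le.2 le_rfl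
      exact ((measurable_pi_apply _).comp hYmC).mono le_sup_right le_rfl
  have h1 : MeasurableSet[MeasurableSpace.comap (pv i) inferInstance] {ω | pv i ω ≤ c} :=
    ⟨Set.Iic c, measurableSet_Iic, rfl⟩
  have h2 : MeasurableSet[(MeasurableSpace.comap B inferInstance : MeasurableSpace Ω)
      ⊔ MeasurableSpace.comap Y inferInstance] (W ⁻¹' S) := hWm hS
  exact (ProbabilityTheory.Indep_iff _ _ _).1 hfinal _ _ h1 h2

end BHAux
/-- Benjamini–Hochberg (1995): under independence, the step-up procedure controls
the false discovery rate at level `(m₀/m)·q ≤ q`. -/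
theorem benjamini_hochberg_fdr_control {Ω : Type*} [MeasureSpace Ω]
    [IsProbabilityMeasure (ℙ : Measure Ω)] (m m₀ : ℕ) (hm : 0 < m)
    (q : ℝ) (hq : 0 ≤ q) (hq1 : q ≤ 1)
    (pv : Fin m → Ω → ℝ) (hmeas : ∀ i, Measurable (pv i))
    (T : Finset (Fin m)) (hT : T.card = m₀)
    (hUnif : ∀ i ∈ T, Measure.map (pv i) ℙ = volume.restrict (Set.Icc (0 : ℝ) 1))
    (hnullIndep : iIndepFun (fun i : T => pv (i : Fin m)) ℙ)
    (hcross : IndepFun (fun ω => fun i : T => pv (i : Fin m) ω)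
      (fun ω => fun j : {j : Fin m // j ∉ T} => pv (j : Fin m) ω) ℙ) :
    (∫ ω, ((T.filter
        (fun i => pv i ω ≤ (bhNumRejections m q (fun i => pv i ω) : ℝ) * q / m)).card : ℝ) /
        max (bhNumRejections m q (fun i => pv i ω) : ℝ) 1 ∂ℙ) ≤ (m₀ / m : ℝ) * q ∧
      (m₀ / m : ℝ) * q ≤ q := by
  have hm0m : (m₀ : ℝ) ≤ m := by
    have h := Finset.card_le_univ T
    rw [hT] at h
    have h2 : m₀ ≤ m := by simpa [Fintype.card_fin] using h
    exact_mod_cast h2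
  have hmR : (0:ℝ) < m := by exact_mod_cast hm
  constructor
  swap
  · calc (m₀ / m : ℝ) * q ≤ 1 * q :=
        mul_le_mul_of_nonneg_right (div_le_one_of_le₀ hm0m hmR.le) hq
      _ = q := one_mul q
  -- abbreviations
  set Ri : Fin m → Ω → ℕ :=
    fun i ω => bhNumRejections m q (Function.update (fun j => pv j ω) i 0) with hRi
  set g : Fin m → ℕ → Ω → ℝ := fun i r ω =>
    if pv i ω ≤ (r : ℝ) * q / m ∧ Ri i ω = r then (r : ℝ)⁻¹ else 0 with hg
  -- pointwise decomposition
  have hpt : ∀ ω : Ω, ((T.filter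
      (fun i => pv i ω ≤ (bhNumRejections m q (fun i => pv i ω) : ℝ) * q / m)).card : ℝ) /
        max (bhNumRejections m q (fun i => pv i ω) : ℝ) 1
      = ∑ i ∈ T, ∑ r ∈ Finset.Icc 1 m, g i r ω := by
    intro ω
    rw [Finset.card_filter]
    push_cast
    rw [Finset.sum_div]
    apply Finset.sum_congr rfl
    intro i hiT
    by_cases h : pv i ω ≤ (bhNumRejections m q (fun j => pv j ω) : ℝ) * q / m
    · have h1R : 1 ≤ bhNumRejections m q (fun j => pv j ω) := BHAux.bh_one_le hm hq h
      have hmax : max ((bhNumRejections m q (fun j => pv j ω) : ℝ)) 1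
          = (bhNumRejections m q (fun j => pv j ω) : ℝ) :=
        max_eq_left (by exact_mod_cast h1R)
      have hupd : Ri i ω = bhNumRejections m q (fun j => pv j ω) := BHAux.bh_update_eq hq h
      rw [if_pos h, hmax,
        Finset.sum_eq_single_of_mem (bhNumRejections m q (fun j => pv j ω))
          (Finset.mem_Icc.2 ⟨h1R, BHAux.bh_le_m _⟩)
          (fun r hr hne => by
            simp only [hg]
            exact if_neg (fun hcon => hne (by rw [← hcon.2]; exact hupd)))]
      simp only [hg]
      rw [if_pos ⟨h, hupd⟩, one_div]
    · rw [if_neg h, zero_div]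
      refine (Finset.sum_eq_zero fun r hr => ?_).symm
      simp only [hg]
      refine if_neg fun hcon => h ?_
      rw [BHAux.bh_of_update_eq hq hcon.2 hcon.1]
      exact hcon.1
  -- measurability
  have hRi_meas : ∀ i, Measurable (Ri i) := by
    intro i
    apply (BHAux.measurable_bh m q).comp
    apply measurable_pi_lambda
    intro j
    by_cases hji : j = i
    · subst hji
      simp only [Function.update_self]
      exact measurable_const
    · simp only [Function.update_of_ne hji]
      exact hmeas j
  have hE : ∀ (i : Fin m) (r : ℕ),
      MeasurableSet {ω | pv i ω ≤ (r : ℝ) * q / m ∧ Ri i ω = r} := by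
    intro i r
    have : {ω | pv i ω ≤ (r : ℝ) * q / m ∧ Ri i ω = r}
        = {ω | pv i ω ≤ (r : ℝ) * q / m} ∩ (Ri i) ⁻¹' {r} := rfl
    rw [this]
    exact (measurableSet_le (hmeas i) measurable_const).inter
      ((hRi_meas i) (MeasurableSet.singleton r))
  have hg_ind : ∀ (i : Fin m) (r : ℕ), g i r
      = Set.indicator {ω | pv i ω ≤ (r : ℝ) * q / m ∧ Ri i ω = r} (fun _ => (r : ℝ)⁻¹) := by
    intro i r
    funext ω
    by_cases h : pv i ω ≤ (r : ℝ) * q / m ∧ Ri i ω = r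
    · simp [hg, Set.indicator_apply, h]
    · simp [hg, Set.indicator_apply, h]
  have hint : ∀ (i : Fin m) (r : ℕ), Integrable (g i r) ℙ := by
    intro i r
    rw [hg_ind]
    exact (integrable_const _).indicator (hE i r)
  have hgint : ∀ (i : Fin m) (r : ℕ), ∫ ω, g i r ω ∂ℙ
      = (ℙ {ω | pv i ω ≤ (r : ℝ) * q / m ∧ Ri i ω = r}).toReal * (r : ℝ)⁻¹ := by
    intro i r
    rw [hg_ind, MeasureTheory.integral_indicator_const _ (hE i r), smul_eq_mul, measureReal_def]
  -- main integral computation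
  have hsplit : (∫ ω, ((T.filter
      (fun i => pv i ω ≤ (bhNumRejections m q (fun i => pv i ω) : ℝ) * q / m)).card : ℝ) /
        max (bhNumRejections m q (fun i => pv i ω) : ℝ) 1 ∂ℙ)
      = ∑ i ∈ T, ∑ r ∈ Finset.Icc 1 m, ∫ ω, g i r ω ∂ℙ := by
    rw [MeasureTheory.integral_congr_ae (Filter.Eventually.of_forall hpt),
      MeasureTheory.integral_finset_sum _
        (fun i _ => integrable_finset_sum _ fun r _ => hint i r)]
    exact Finset.sum_congr rfl fun i _ =>
      MeasureTheory.integral_finset_sum _ fun r _ => hint i r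
  rw [hsplit]
  -- bound each summand
  have hbound : ∀ i ∈ T, ∑ r ∈ Finset.Icc 1 m, ∫ ω, g i r ω ∂ℙ ≤ q / m := by
    intro i hiT
    have hterm : ∀ r ∈ Finset.Icc 1 m, ∫ ω, g i r ω ∂ℙ
        ≤ (q / m) * (ℙ {ω | Ri i ω = r}).toReal := by
      intro r hr
      rw [Finset.mem_Icc] at hr
      have hr1 : (1:ℝ) ≤ r := by exact_mod_cast hr.1
      have hc0 : (0:ℝ) ≤ (r : ℝ) * q / m := BHAux.thr_nonneg hq r
      have hc1 : (r : ℝ) * q / m ≤ 1 := by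
        have hrm : (r : ℝ) ≤ m := by exact_mod_cast hr.2
        calc (r : ℝ) * q / m ≤ (m : ℝ) * q / m := by gcongr
          _ = q := by field_simp
          _ ≤ 1 := hq1
      -- the event splits as an intersection and by independence
      have hinter : {ω | pv i ω ≤ (r : ℝ) * q / m ∧ Ri i ω = r}
          = {ω | pv i ω ≤ (r : ℝ) * q / m}
            ∩ (fun ω => Function.update (fun j => pv j ω) i 0) ⁻¹'
              (bhNumRejections m q ⁻¹' {r}) := rfl
      have hindep := BHAux.indep_pv_W pv hmeas T hnullIndep hcross hiT ((r : ℝ) * q / m)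
        (bhNumRejections m q ⁻¹' {r}) ((BHAux.measurable_bh m q) (MeasurableSet.singleton r))
      have hPc : ℙ {ω | pv i ω ≤ (r : ℝ) * q / m} = ENNReal.ofReal ((r : ℝ) * q / m) := by
        have hpre : {ω | pv i ω ≤ (r : ℝ) * q / m}
            = pv i ⁻¹' (Set.Iic ((r : ℝ) * q / m)) := rfl
        rw [hpre, ← Measure.map_apply (hmeas i) measurableSet_Iic, hUnif i hiT,
          Measure.restrict_apply measurableSet_Iic,
          show Set.Iic ((r : ℝ) * q / m) ∩ Set.Icc 0 1 = Set.Icc 0 ((r : ℝ) * q / m) by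
            ext x
            simp only [Set.mem_inter_iff, Set.mem_Iic, Set.mem_Icc]
            constructor
            · rintro ⟨h1, h2, _⟩; exact ⟨h2, h1⟩
            · rintro ⟨h1, h2⟩; exact ⟨h2, h1, h2.trans hc1⟩,
          Real.volume_Icc, sub_zero]
      have hrne : (r : ℝ) ≠ 0 := by positivity
      have hcr : ((r : ℝ) * q / m) * (r : ℝ)⁻¹ = q / m := by
        have h1 : (r : ℝ) * q / m * (r : ℝ)⁻¹ = q * ((r : ℝ) * (r : ℝ)⁻¹) / m := by ring
        rw [h1, mul_inv_cancel₀ hrne, mul_one]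
      refine le_of_eq ?_
      calc ∫ ω, g i r ω ∂ℙ
          = (ℙ {ω | pv i ω ≤ (r : ℝ) * q / m ∧ Ri i ω = r}).toReal * (r : ℝ)⁻¹ := hgint i r
        _ = ((ℙ {ω | pv i ω ≤ (r : ℝ) * q / m}).toReal
              * (ℙ {ω | Ri i ω = r}).toReal) * (r : ℝ)⁻¹ := by
            rw [hinter, hindep, ENNReal.toReal_mul]; rfl
        _ = (((r : ℝ) * q / m) * (r : ℝ)⁻¹) * (ℙ {ω | Ri i ω = r}).toReal := by
            rw [hPc, ENNReal.toReal_ofReal hc0]; ring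
        _ = (q / m) * (ℙ {ω | Ri i ω = r}).toReal := by rw [hcr]
    have hPsum : ∑ r ∈ Finset.Icc 1 m, (ℙ {ω | Ri i ω = r}).toReal ≤ 1 := by
      have hdisj : (↑(Finset.Icc 1 m) : Set ℕ).PairwiseDisjoint
          (fun r => {ω | Ri i ω = r}) := by
        intro r _ s _ hrs
        apply Set.disjoint_left.2
        intro ω h1 h2
        exact hrs (h1.symm.trans h2)
      have hsum : ∑ r ∈ Finset.Icc 1 m, ℙ {ω | Ri i ω = r}
          = ℙ (⋃ r ∈ Finset.Icc 1 m, {ω | Ri i ω = r}) :=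
        (measure_biUnion_finset hdisj fun r _ => (hRi_meas i) (MeasurableSet.singleton r)).symm
      rw [← ENNReal.toReal_sum (fun r _ => measure_ne_top _ _), hsum]
      exact ENNReal.toReal_le_of_le_ofReal one_pos.le (by simpa using prob_le_one)
    calc ∑ r ∈ Finset.Icc 1 m, ∫ ω, g i r ω ∂ℙ
        ≤ ∑ r ∈ Finset.Icc 1 m, (q / m) * (ℙ {ω | Ri i ω = r}).toReal :=
          Finset.sum_le_sum hterm
      _ = (q / m) * ∑ r ∈ Finset.Icc 1 m, (ℙ {ω | Ri i ω = r}).toReal := by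
          rw [Finset.mul_sum]
      _ ≤ (q / m) * 1 := mul_le_mul_of_nonneg_left hPsum (by positivity)
      _ = q / m := mul_one _
  calc ∑ i ∈ T, ∑ r ∈ Finset.Icc 1 m, ∫ ω, g i r ω ∂ℙ
      ≤ ∑ _i ∈ T, q / m := Finset.sum_le_sum hbound
    _ = (m₀ : ℝ) * (q / m) := by rw [Finset.sum_const, hT, nsmul_eq_mul]
    _ = (m₀ / m : ℝ) * q := by ring
end
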